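/- arXiv:2605.03945 — 3 statements merged into one kernel-verified Lean document; each statement's English description precedes it below -/
import Mathlib

section
/- Let λ ≥ 0 and u > 0 be constants and let C > 0. Suppose n and v satisfy n ≥ 10·C·max{λ,1}/u and |u - v| ≤ C/n, with v > 0 and (λ+1)u - λv > 0. Then (λ+1)·log u - λ·log v - log((λ+1)u - λv) ≤ 2λ(λ+1)C²/(3n²u²). -/
lemma log_ge_quad {x : ℝ} (hx : |x| ≤ 1/10) :
    x - (5/9) * x^2 ≤ Real.log (1 + x) := by
  obtain ⟨hx1, hx2⟩ := abs_le.mp hx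
  set g : ℝ → ℝ := fun y => Real.log (1+y) - y + 5/9 * y^2 with hg
  have hderiv : ∀ y : ℝ, -(1/10) ≤ y → y ≤ 1/10 →
      HasDerivAt g ((1+y)⁻¹ - 1 + 10/9 * y) y := by
    intro y h1 h2
    have hne : 1 + y ≠ 0 := by intro h; nlinarith
    have h1' : HasDerivAt (fun z : ℝ => 1 + z) 1 y := (hasDerivAt_id y).const_add 1
    have hlog : HasDerivAt (fun z : ℝ => Real.log (1+z)) ((1+y)⁻¹ * 1) y :=
      (Real.hasDerivAt_log hne).comp y h1'
    have hsq : HasDerivAt (fun z : ℝ => 5/9 * z^2) (5/9 * (2*y)) y := by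
      simpa using ((hasDerivAt_pow 2 y).const_mul (5/9 : ℝ))
    have := (hlog.sub (hasDerivAt_id y)).add hsq
    exact this.congr_deriv (by ring)
  have hcont : ContinuousOn g (Set.Icc (-(1/10) : ℝ) (1/10)) := by
    intro y hy
    exact (hderiv y hy.1 hy.2).continuousAt.continuousWithinAt
  have hderiv_eq : ∀ y : ℝ, -(1/10) < y → y < 1/10 →
      deriv g y = y * (1 + 10*y) / (9 * (1+y)) := by
    intro y h1 h2
    rw [(hderiv y h1.le h2.le).deriv]
    have hne : (1:ℝ) + y ≠ 0 := by intro h; nlinarith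
    field_simp
    ring
  have mono : MonotoneOn g (Set.Icc (0:ℝ) (1/10)) := by
    apply monotoneOn_of_deriv_nonneg (convex_Icc _ _)
    · exact hcont.mono (Set.Icc_subset_Icc (by norm_num) le_rfl)
    · intro y hy
      rw [interior_Icc] at hy
      exact ((hderiv y (by linarith [hy.1]) hy.2.le).differentiableAt).differentiableWithinAt
    · intro y hy
      rw [interior_Icc] at hy
      rw [hderiv_eq y (by linarith [hy.1]) hy.2]
      have hy1 : (0:ℝ) < 1 + y := by linarith [hy.1]
      apply div_nonneg
      · nlinarith [hy.1, hy.2]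
      · linarith
  have anti : AntitoneOn g (Set.Icc (-(1/10):ℝ) 0) := by
    apply antitoneOn_of_deriv_nonpos (convex_Icc _ _)
    · exact hcont.mono (Set.Icc_subset_Icc le_rfl (by norm_num))
    · intro y hy
      rw [interior_Icc] at hy
      exact ((hderiv y hy.1.le (by linarith [hy.2])).differentiableAt).differentiableWithinAt
    · intro y hy
      rw [interior_Icc] at hy
      rw [hderiv_eq y hy.1 (by linarith [hy.2])]
      have h1 : (0:ℝ) < 1 + y := by linarith [hy.1]
      have h2 : (0:ℝ) ≤ 1 + 10*y := by linarith [hy.1]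
      have : y * (1 + 10*y) ≤ 0 := mul_nonpos_of_nonpos_of_nonneg hy.2.le h2
      exact div_nonpos_of_nonpos_of_nonneg this (by positivity)
  have hg0 : g 0 = 0 := by simp [hg]
  have key : 0 ≤ g x := by
    rcases le_or_gt 0 x with h | h
    · have := mono (Set.mem_Icc.mpr ⟨le_rfl, by norm_num⟩) (Set.mem_Icc.mpr ⟨h, hx2⟩) h
      rwa [hg0] at this
    · have := anti (Set.mem_Icc.mpr ⟨hx1, h.le⟩) (Set.mem_Icc.mpr ⟨by norm_num, le_rfl⟩) h.le
      rwa [hg0] at this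
  simp only [hg] at key
  linarith

set_option maxHeartbeats 1600000 in
theorem stmt_1 (lam u v C n : ℝ) (hlam : 0 ≤ lam) (hu : 0 < u) (hC : 0 < C)
    (hn : n ≥ 10 * C * max lam 1 / u) (hv : |u - v| ≤ C / n) (hv' : 0 < v)
    (hpos : 0 < (lam + 1) * u - lam * v) :
    (lam + 1) * Real.log u - lam * Real.log v - Real.log ((lam + 1) * u - lam * v)
      ≤ 2 * lam * (lam + 1) * C^2 / (3 * n^2 * u^2) := by
  have hmax1 : (1:ℝ) ≤ max lam 1 := le_max_right _ _
  have hmaxlam : lam ≤ max lam 1 := le_max_left _ _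
  have hn0 : 0 < n := lt_of_lt_of_le (by positivity) hn
  -- C/n ≤ u/(10 * max lam 1)
  have hCn : C / n ≤ u / (10 * max lam 1) := by
    rw [div_le_div_iff₀ hn0 (by positivity)]
    have : 10 * C * max lam 1 ≤ n * u := by
      rw [ge_iff_le, div_le_iff₀ hu] at hn
      linarith
    nlinarith
  set t : ℝ := (v - u) / u with ht
  have htabs : |t| ≤ C / (n * u) := by
    rw [ht, abs_div, abs_of_pos hu, div_le_div_iff₀ hu (by positivity)]
    have : |v - u| ≤ C / n := by rwa [abs_sub_comm] at hv
    calc |v - u| * (n * u) ≤ (C / n) * (n * u) := by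
          apply mul_le_mul_of_nonneg_right this (by positivity)
      _ = C * u := by field_simp
  have htu : C / (n * u) ≤ 1 / (10 * max lam 1) := by
    rw [div_le_div_iff₀ (by positivity) (by positivity)]
    have := hCn
    rw [div_le_div_iff₀ hn0 (by positivity)] at this
    nlinarith
  have ht10 : |t| ≤ 1/10 := by
    have : (1:ℝ) / (10 * max lam 1) ≤ 1/10 := by
      rw [div_le_div_iff₀ (by positivity) (by norm_num)]
      linarith
    linarith [htabs.trans htu]
  have hlt10 : |(-(lam * t))| ≤ 1/10 := by
    rw [abs_neg, abs_mul, abs_of_nonneg hlam]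
    have h1 : lam * |t| ≤ max lam 1 * (1 / (10 * max lam 1)) := by
      apply mul_le_mul hmaxlam (htabs.trans htu) (abs_nonneg _) (by linarith)
    have h2 : max lam 1 * (1 / (10 * max lam 1)) = 1/10 := by
      field_simp
    linarith
  -- rewrite logs
  have h1t : 1 + t = v / u := by rw [ht]; field_simp; ring
  have h2t : 1 + (-(lam * t)) = ((lam + 1) * u - lam * v) / u := by
    rw [ht]; field_simp; ring
  have hlogv : Real.log v = Real.log u + Real.log (1 + t) := by
    rw [h1t, Real.log_div (ne_of_gt hv') (ne_of_gt hu)]; ring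
  have hlogp : Real.log ((lam + 1) * u - lam * v) = Real.log u + Real.log (1 + (-(lam * t))) := by
    rw [h2t, Real.log_div (ne_of_gt hpos) (ne_of_gt hu)]; ring
  have key1 := log_ge_quad ht10
  have key2 := log_ge_quad hlt10
  have hmul : lam * (t - 5/9 * t^2) ≤ lam * Real.log (1 + t) :=
    mul_le_mul_of_nonneg_left key1 hlam
  rw [hlogv, hlogp]
  have step : (lam + 1) * Real.log u - lam * (Real.log u + Real.log (1 + t)) -
      (Real.log u + Real.log (1 + (-(lam * t)))) ≤ 5/9 * lam * (lam + 1) * t^2 := by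
    nlinarith [key2, hmul]
  have ht2 : t^2 ≤ C^2 / (n^2 * u^2) := by
    have h := mul_self_le_mul_self (abs_nonneg t) htabs
    have e1 : |t| * |t| = t^2 := by rw [← sq_abs t]; ring
    have e2 : C / (n * u) * (C / (n * u)) = C^2 / (n^2 * u^2) := by
      field_simp
    rw [e1, e2] at h
    exact h
  refine step.trans ?_
  have hll : (0:ℝ) ≤ lam * (lam + 1) := by nlinarith
  have hstep2 : 5/9 * lam * (lam + 1) * t^2 ≤ 5/9 * lam * (lam + 1) * (C^2 / (n^2 * u^2)) := by
    have hc : (0:ℝ) ≤ 5/9 * lam * (lam + 1) := by nlinarith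
    calc 5/9 * lam * (lam + 1) * t^2 = (5/9 * lam * (lam + 1)) * t^2 := by ring
      _ ≤ (5/9 * lam * (lam + 1)) * (C^2 / (n^2 * u^2)) := mul_le_mul_of_nonneg_left ht2 hc
      _ = 5/9 * lam * (lam + 1) * (C^2 / (n^2 * u^2)) := by ring
  refine hstep2.trans ?_
  have hdiff : 2 * lam * (lam + 1) * C^2 / (3 * n^2 * u^2)
      - 5/9 * lam * (lam + 1) * (C^2 / (n^2 * u^2))
      = (lam * (lam + 1)) * (C^2 / (9 * n^2 * u^2)) := by
    field_simp
    ring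
  have hnonneg : 0 ≤ (lam * (lam + 1)) * (C^2 / (9 * n^2 * u^2)) := by
    apply mul_nonneg hll
    positivity
  linarith
end

section
/- Let P = N(μ₁, Σ₁) and Q = N(μ₂, Σ₂) be m-dimensional Gaussians with positive definite covariances, and let α ∈ (0,1) ∪ (1,∞) be such that Σ_α := (1-α)Σ₁ + αΣ₂ is positive definite. Then ∫ p(x)^α q(x)^{1-α} dx = (|Σ₂|^{α/2} |Σ₁|^{(1-α)/2} / |Σ_α|^{1/2}) · exp(-(α(1-α)/2)·(μ₁ - μ₂)ᵀ Σ_α^{-1} (μ₁ - μ₂)), where p, q are the densities of P, Q. -/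
open MeasureTheory Real Matrix

/-- Density of an `m`-dimensional Gaussian with mean `μ` and covariance `S`. -/
noncomputable def mvGaussianPDF (m : ℕ) (μ : Fin m → ℝ) (S : Matrix (Fin m) (Fin m) ℝ)
    (x : Fin m → ℝ) : ℝ :=
  (2 * π) ^ (-(m : ℝ) / 2) * S.det ^ (-(1:ℝ) / 2) *
    Real.exp (-(1/2) * ((x - μ) ⬝ᵥ S⁻¹ *ᵥ (x - μ)))

lemma rpow_combine {P d1 d2 : ℝ} (hP : 0 < P) (h1 : 0 < d1) (h2 : 0 < d2) {e f : ℝ} (α t s : ℝ) :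
    (P^e * d1^f * Real.exp t)^α * (P^e * d2^f * Real.exp s)^(1-α)
      = P^e * d1^(f*α) * d2^(f*(1-α)) * Real.exp (α*t + (1-α)*s) := by
  rw [Real.mul_rpow (by positivity) (Real.exp_nonneg t),
      Real.mul_rpow (by positivity) (by positivity),
      Real.mul_rpow (by positivity) (Real.exp_nonneg s),
      Real.mul_rpow (by positivity) (by positivity),
      ← Real.rpow_mul hP.le, ← Real.rpow_mul hP.le, ← Real.rpow_mul h1.le, ← Real.rpow_mul h2.le,
      ← Real.exp_mul, ← Real.exp_mul]
  have hPP : P^(e*α) * P^(e*(1-α)) = P^e := by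
    rw [← Real.rpow_add hP]; congr 1; ring
  calc P ^ (e * α) * d1 ^ (f * α) * Real.exp (t * α)
        * (P ^ (e * (1-α)) * d2 ^ (f * (1-α)) * Real.exp (s * (1-α)))
      = (P^(e*α) * P^(e*(1-α))) * d1^(f*α) * d2^(f*(1-α))
          * (Real.exp (t*α) * Real.exp (s*(1-α))) := by ring
    _ = P^e * d1^(f*α) * d2^(f*(1-α)) * Real.exp (α*t + (1-α)*s) := by
        rw [hPP, ← Real.exp_add]; ring_nf

open scoped MatrixOrder in
noncomputable def Matrix.PosSemidef.sqrt {n : Type*} [Fintype n] [DecidableEq n]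
    {A : Matrix n n ℝ} (_hA : A.PosSemidef) : Matrix n n ℝ := CFC.sqrt A

open scoped MatrixOrder in
lemma Matrix.PosSemidef.sqrt_mul_self {n : Type*} [Fintype n] [DecidableEq n]
    {A : Matrix n n ℝ} (hA : A.PosSemidef) : hA.sqrt * hA.sqrt = A :=
  CFC.sqrt_mul_sqrt_self A hA.nonneg

open scoped MatrixOrder in
lemma Matrix.PosSemidef.posSemidef_sqrt {n : Type*} [Fintype n] [DecidableEq n]
    {A : Matrix n n ℝ} (hA : A.PosSemidef) : hA.sqrt.PosSemidef :=
  (CFC.sqrt_nonneg A).posSemidef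

section Helpers
variable {n : Type*} [Fintype n] [DecidableEq n]

variable {n : Type*} [Fintype n] [DecidableEq n]

lemma posDef_conj {A B : Matrix n n ℝ} (hA : A.PosDef) (hB : IsUnit B.det) :
    (Bᵀ * A * B).PosDef := by
  have hinj := Matrix.mulVec_injective_iff_isUnit.mpr ((Matrix.isUnit_iff_isUnit_det B).mpr hB)
  simpa using hA.conjTranspose_mul_mul_same hinj

lemma sqrt_det_ne {A : Matrix n n ℝ} (hA : A.PosDef) :
    hA.posSemidef.sqrt.det ≠ 0 := by
  have h := hA.posSemidef.sqrt_mul_self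
  have : hA.posSemidef.sqrt.det * hA.posSemidef.sqrt.det = A.det := by
    rw [← Matrix.det_mul, h]
  intro h0
  have hd := hA.det_pos
  rw [h0, mul_zero] at this
  exact hd.ne this

lemma sqrt_transpose {A : Matrix n n ℝ} (hA : A.PosDef) :
    hA.posSemidef.sqrtᵀ = hA.posSemidef.sqrt := by
  have := hA.posSemidef.posSemidef_sqrt.isHermitian.eq
  simpa using this

lemma combo_posDef {S1 S2 : Matrix n n ℝ} (h1 : S1.PosDef) (h2 : S2.PosDef) {α : ℝ}
    (hαpd : ((1 - α) • S1 + α • S2).PosDef) : (α • S1⁻¹ + (1 - α) • S2⁻¹).PosDef := by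
  have hW : (S1⁻¹).PosDef := h1.inv
  set s := hW.posSemidef.sqrt with hs
  have hss : s * s = S1⁻¹ := hW.posSemidef.sqrt_mul_self
  have hsT : sᵀ = s := sqrt_transpose hW
  have hsd : s.det ≠ 0 := sqrt_det_ne hW
  have hst : s * s⁻¹ = 1 := Matrix.mul_nonsing_inv s (Ne.isUnit hsd)
  have hts : s⁻¹ * s = 1 := Matrix.nonsing_inv_mul s (Ne.isUnit hsd)
  have htT : (s⁻¹)ᵀ = s⁻¹ := by rw [Matrix.transpose_nonsing_inv, hsT]
  have htd : (s⁻¹).det ≠ 0 := by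
    rw [Matrix.det_nonsing_inv]
    simpa using hsd
  set K := s⁻¹ * S2⁻¹ * s⁻¹ with hKdef
  have hK : K.PosDef := by
    have := posDef_conj (B := s⁻¹) h2.inv (Ne.isUnit htd)
    rwa [htT] at this
  set r := hK.posSemidef.sqrt with hr
  have hrr : r * r = K := hK.posSemidef.sqrt_mul_self
  have hrT : rᵀ = r := sqrt_transpose hK
  have hrd : r.det ≠ 0 := sqrt_det_ne hK
  have hsS1s : s * S1 * s = 1 := by
    have hS1 : S1 = s⁻¹ * s⁻¹ := by
      rw [← Matrix.mul_inv_rev, hss, Matrix.nonsing_inv_nonsing_inv S1 (Ne.isUnit h1.det_pos.ne')]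
    rw [hS1]
    simp only [← Matrix.mul_assoc]
    rw [hst, Matrix.one_mul, hts]
  have hKinv : K⁻¹ = s * S2 * s := by
    rw [hKdef, Matrix.mul_inv_rev, Matrix.mul_inv_rev,
      Matrix.nonsing_inv_nonsing_inv s (Ne.isUnit hsd),
      Matrix.nonsing_inv_nonsing_inv S2 (Ne.isUnit h2.det_pos.ne'), Matrix.mul_assoc]
  have hrKinvr : r * K⁻¹ * r = 1 := by
    have hKinv' : K⁻¹ = r⁻¹ * r⁻¹ := by rw [← Matrix.mul_inv_rev, hrr]
    rw [hKinv']
    simp only [← Matrix.mul_assoc]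
    rw [Matrix.mul_nonsing_inv r (Ne.isUnit hrd), Matrix.one_mul,
      Matrix.nonsing_inv_mul r (Ne.isUnit hrd)]
  have hsKs : s * K * s = S2⁻¹ := by
    rw [hKdef]
    simp only [← Matrix.mul_assoc]
    rw [hst, Matrix.one_mul, Matrix.mul_assoc, hts, Matrix.mul_one]
  set C := s * r * s with hC
  have hCT : Cᵀ = C := by
    rw [hC, Matrix.transpose_mul, Matrix.transpose_mul, hsT, hrT, Matrix.mul_assoc]
  have hCd : IsUnit C.det := by
    rw [hC, Matrix.det_mul, Matrix.det_mul]
    exact Ne.isUnit (by simp [hsd, hrd])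
  have key : C * ((1 - α) • S1 + α • S2) * C = α • S1⁻¹ + (1 - α) • S2⁻¹ := by
    have expand : C * ((1 - α) • S1 + α • S2) * C
        = s * (r * (s * ((1 - α) • S1 + α • S2) * s) * r) * s := by
      simp only [hC, Matrix.mul_assoc]
    rw [expand]
    have e1 : s * ((1 - α) • S1 + α • S2) * s = (1 - α) • (1 : Matrix n n ℝ) + α • K⁻¹ := by
      simp only [Matrix.mul_add, Matrix.add_mul, Matrix.mul_smul, Matrix.smul_mul]
      rw [hsS1s, hKinv]
    rw [e1]
    have e2 : r * ((1 - α) • (1 : Matrix n n ℝ) + α • K⁻¹) * r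
        = (1 - α) • K + α • (1 : Matrix n n ℝ) := by
      simp only [Matrix.mul_add, Matrix.add_mul, Matrix.mul_smul, Matrix.smul_mul]
      rw [Matrix.mul_one, hrr, hrKinvr]
    rw [e2]
    simp only [Matrix.mul_add, Matrix.add_mul, Matrix.mul_smul, Matrix.smul_mul]
    rw [hsKs, Matrix.mul_one, hss, add_comm]
  have := posDef_conj (B := C) hαpd hCd
  rwa [hCT, key] at this

end Helpers

section Helpers2
variable {m : ℕ}

lemma dp_conj' {m : ℕ} (A B : Matrix (Fin m) (Fin m) ℝ) (x y : Fin m → ℝ) :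
    (B *ᵥ x) ⬝ᵥ (A *ᵥ (B *ᵥ y)) = x ⬝ᵥ ((Bᵀ * A * B) *ᵥ y) := by
  rw [← Matrix.mulVec_mulVec, ← Matrix.mulVec_mulVec, Matrix.dotProduct_mulVec x,
    Matrix.vecMul_transpose, Matrix.dotProduct_mulVec (B *ᵥ x)]

lemma gauss_cont {m : ℕ} (M : Matrix (Fin m) (Fin m) ℝ) :
    Continuous fun y : Fin m → ℝ => Real.exp (-(1/2) * (y ⬝ᵥ M *ᵥ y)) := by
  apply Real.continuous_exp.comp
  apply Continuous.mul continuous_const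
  simp only [dotProduct, Matrix.mulVec]
  exact continuous_finset_sum _ fun i _ => (continuous_apply i).mul
    (continuous_finset_sum _ fun j _ => (continuous_const.mul (continuous_apply j)))

lemma gauss_std {m : ℕ} :
    ∫ x : Fin m → ℝ, Real.exp (-(1/2) * (x ⬝ᵥ x)) = (2 * π) ^ ((m : ℝ) / 2) := by
  have hpt : ∀ x : Fin m → ℝ, Real.exp (-(1/2) * (x ⬝ᵥ x))
      = ∏ i, Real.exp (-(1/2) * (x i)^2) := by
    intro x
    rw [← Real.exp_sum]
    congr 1
    simp only [dotProduct, Finset.mul_sum]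
    exact Finset.sum_congr rfl fun i _ => by ring
  simp_rw [hpt]
  rw [show (∫ x : Fin m → ℝ, ∏ i, Real.exp (-(1/2) * (x i)^2))
      = (∫ t : ℝ, Real.exp (-(1/2) * t^2)) ^ Fintype.card (Fin m) from by
    rw [MeasureTheory.volume_pi]
    exact MeasureTheory.integral_fintype_prod_eq_pow (ι := Fin m) (fun t : ℝ => Real.exp (-(1/2) * t^2))]
  have h1 : ∫ t : ℝ, Real.exp (-(1/2) * t^2) = Real.sqrt (2 * π) := by
    rw [integral_gaussian (1/2), show π / (1/2) = 2 * π by ring]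
  rw [h1, Fintype.card_fin, ← Real.rpow_natCast (Real.sqrt (2*π)) m,
    Real.rpow_def_of_pos (Real.sqrt_pos.mpr (by positivity)),
    Real.log_sqrt (by positivity), Real.rpow_def_of_pos (by positivity)]
  ring_nf

lemma gauss_int {m : ℕ} {M : Matrix (Fin m) (Fin m) ℝ} (hM : M.PosDef) :
    ∫ x : Fin m → ℝ, Real.exp (-(1/2) * (x ⬝ᵥ M *ᵥ x))
      = (2 * π) ^ ((m : ℝ) / 2) * M.det ^ (-(1:ℝ) / 2) := by
  set s := hM.posSemidef.sqrt with hs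
  have hss : s * s = M := hM.posSemidef.sqrt_mul_self
  have hsT : sᵀ = s := by simpa using hM.posSemidef.posSemidef_sqrt.isHermitian.eq
  have hsd2 : s.det * s.det = M.det := by rw [← Matrix.det_mul, hss]
  have hMd : 0 < M.det := hM.det_pos
  have hsd : s.det ≠ 0 := by
    intro h0
    rw [h0, mul_zero] at hsd2
    exact hMd.ne hsd2
  set B := s⁻¹ with hB
  have hBdet : B.det = s.det⁻¹ := by
    rw [hB, Matrix.det_nonsing_inv, Ring.inverse_eq_inv']
  have hBd : B.det ≠ 0 := by rw [hBdet]; simpa using hsd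
  have hBT : Bᵀ = B := by rw [hB, Matrix.transpose_nonsing_inv, hsT]
  have hBMB : Bᵀ * M * B = 1 := by
    rw [hBT, hB, ← hss]
    simp only [← Matrix.mul_assoc]
    rw [Matrix.nonsing_inv_mul s (Ne.isUnit hsd), Matrix.one_mul,
      Matrix.mul_nonsing_inv s (Ne.isUnit hsd)]
  have hfc : Continuous fun y : Fin m → ℝ => Real.exp (-(1/2) * (y ⬝ᵥ M *ᵥ y)) := gauss_cont M
  have hBm : AEMeasurable (Matrix.toLin' B) (volume : Measure (Fin m → ℝ)) :=
    (LinearMap.continuous_of_finiteDimensional _).measurable.aemeasurable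
  have hmap := Real.map_matrix_volume_pi_eq_smul_volume_pi hBd
  have key : (∫ x : Fin m → ℝ, Real.exp (-(1/2) * ((Matrix.toLin' B) x ⬝ᵥ M *ᵥ (Matrix.toLin' B) x)))
      = |B.det⁻¹| * ∫ x : Fin m → ℝ, Real.exp (-(1/2) * (x ⬝ᵥ M *ᵥ x)) := by
    rw [← MeasureTheory.integral_map hBm hfc.aestronglyMeasurable, hmap,
      MeasureTheory.integral_smul_measure, ENNReal.toReal_ofReal (abs_nonneg _), smul_eq_mul]
  have hcomp : ∀ x : Fin m → ℝ,
      Real.exp (-(1/2) * ((Matrix.toLin' B) x ⬝ᵥ M *ᵥ (Matrix.toLin' B) x))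
        = Real.exp (-(1/2) * (x ⬝ᵥ x)) := by
    intro x
    rw [Matrix.toLin'_apply, dp_conj', hBMB, Matrix.one_mulVec]
  simp_rw [hcomp] at key
  rw [gauss_std] at key
  have habs : |B.det⁻¹| = Real.sqrt M.det := by
    rw [hBdet, inv_inv, ← hsd2, Real.sqrt_mul_self_eq_abs]
  rw [habs] at key
  have hsqrt_ne : Real.sqrt M.det ≠ 0 := by positivity
  have : (∫ x : Fin m → ℝ, Real.exp (-(1/2) * (x ⬝ᵥ M *ᵥ x)))
      = (2 * π) ^ ((m : ℝ) / 2) / Real.sqrt M.det := by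
    field_simp at key ⊢
    linarith [key]
  rw [this, Real.sqrt_eq_rpow, div_eq_mul_inv, ← Real.rpow_neg hMd.le]
  norm_num

lemma dp_conj2 (A N C : Matrix (Fin m) (Fin m) ℝ) (u w : Fin m → ℝ) :
    (A *ᵥ u) ⬝ᵥ (N *ᵥ (C *ᵥ w)) = u ⬝ᵥ ((Aᵀ * N * C) *ᵥ w) := by
  rw [← Matrix.mulVec_mulVec, ← Matrix.mulVec_mulVec, Matrix.dotProduct_mulVec u,
    Matrix.vecMul_transpose, Matrix.dotProduct_mulVec (A *ᵥ u)]

lemma dp_symm {A : Matrix (Fin m) (Fin m) ℝ} (hA : Aᵀ = A) (x y : Fin m → ℝ) :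
    x ⬝ᵥ (A *ᵥ y) = y ⬝ᵥ (A *ᵥ x) := by
  conv_lhs => rw [Matrix.dotProduct_mulVec, ← hA, Matrix.vecMul_transpose]
  rw [dotProduct_comm]

end Helpers2

set_option maxHeartbeats 2000000 in
/-- Closed form of `∫ p(x)^α q(x)^{1-α} dx` for two multivariate Gaussians. -/
theorem stmt_5 (m : ℕ) (μ₁ μ₂ : Fin m → ℝ) (S1 S2 : Matrix (Fin m) (Fin m) ℝ)
    (h1 : S1.PosDef) (h2 : S2.PosDef) (α : ℝ) (hα : 0 < α) (hα1 : α ≠ 1)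
    (hαpd : ((1 - α) • S1 + α • S2).PosDef) :
    (∫ x : Fin m → ℝ, mvGaussianPDF m μ₁ S1 x ^ α * mvGaussianPDF m μ₂ S2 x ^ (1 - α))
      = (S2.det ^ (α / 2) * S1.det ^ ((1 - α) / 2) / ((1 - α) • S1 + α • S2).det ^ ((1:ℝ) / 2))
        * Real.exp (-(α * (1 - α) / 2) *
            ((μ₁ - μ₂) ⬝ᵥ ((1 - α) • S1 + α • S2)⁻¹ *ᵥ (μ₁ - μ₂))) := by
  set A := S1⁻¹ with hAdef
  set Bm := S2⁻¹ with hBdef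
  set Sg := (1 - α) • S1 + α • S2 with hSgdef
  set G := Sg⁻¹ with hGdef
  set Mb := α • A + (1 - α) • Bm with hMbdef
  have hβ : (1:ℝ) - α ≠ 0 := sub_ne_zero.mpr (Ne.symm hα1)
  have hS1u : IsUnit S1.det := Ne.isUnit h1.det_pos.ne'
  have hS2u : IsUnit S2.det := Ne.isUnit h2.det_pos.ne'
  have hSgu : IsUnit Sg.det := Ne.isUnit hαpd.det_pos.ne'
  have hS1i : S1 * A = 1 := Matrix.mul_nonsing_inv S1 hS1u
  have hS1i' : A * S1 = 1 := Matrix.nonsing_inv_mul S1 hS1u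
  have hS2i : S2 * Bm = 1 := Matrix.mul_nonsing_inv S2 hS2u
  have hS2i' : Bm * S2 = 1 := Matrix.nonsing_inv_mul S2 hS2u
  have hSgi : Sg * G = 1 := Matrix.mul_nonsing_inv Sg hSgu
  have hSgi' : G * Sg = 1 := Matrix.nonsing_inv_mul Sg hSgu
  have hS1T : S1ᵀ = S1 := by simpa using h1.isHermitian.eq
  have hS2T : S2ᵀ = S2 := by simpa using h2.isHermitian.eq
  have hAT : Aᵀ = A := by rw [hAdef, Matrix.transpose_nonsing_inv, hS1T]
  have hBT : Bmᵀ = Bm := by rw [hBdef, Matrix.transpose_nonsing_inv, hS2T]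
  have hMbT : Mbᵀ = Mb := by
    rw [hMbdef, Matrix.transpose_add, Matrix.transpose_smul, Matrix.transpose_smul, hAT, hBT]
  have hrel : S1 * Mb * S2 = Sg := by
    rw [hMbdef, Matrix.mul_add, Matrix.add_mul, Matrix.mul_smul, Matrix.smul_mul,
      Matrix.mul_smul, Matrix.smul_mul, hS1i, Matrix.one_mul, Matrix.mul_assoc S1 Bm S2,
      hS2i', Matrix.mul_one, hSgdef, add_comm]
  have hMbpd : Mb.PosDef := combo_posDef h1 h2 hαpd
  have hMbu : IsUnit Mb.det := Ne.isUnit hMbpd.det_pos.ne'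
  have hMbi : Mb * Mb⁻¹ = 1 := Matrix.mul_nonsing_inv Mb hMbu
  -- Mb = S1⁻¹ * Sg * S2⁻¹ and the two inverse forms
  have hMbform : Mb = A * Sg * Bm := by
    rw [← hrel]
    simp only [← Matrix.mul_assoc]
    rw [hS1i', Matrix.one_mul, Matrix.mul_assoc, hS2i, Matrix.mul_one]
  have hMbform' : Mb = Bm * Sg * A := by
    have := hMbT
    conv_lhs => rw [← this, hMbform]
    rw [Matrix.transpose_mul, Matrix.transpose_mul, hAT, hBT]
    rw [show Sgᵀ = Sg from by
      rw [hSgdef, Matrix.transpose_add, Matrix.transpose_smul, Matrix.transpose_smul, hS1T, hS2T]]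
    rw [Matrix.mul_assoc]
  have hMinv : Mb⁻¹ = S2 * G * S1 := by
    apply Matrix.inv_eq_right_inv
    rw [hMbform]
    simp only [← Matrix.mul_assoc]
    rw [Matrix.mul_assoc (A * Sg) Bm S2, hS2i', Matrix.mul_one, Matrix.mul_assoc A Sg G,
      hSgi, Matrix.mul_one, hS1i']
  have hMinv' : Mb⁻¹ = S1 * G * S2 := by
    apply Matrix.inv_eq_right_inv
    rw [hMbform']
    simp only [← Matrix.mul_assoc]
    rw [Matrix.mul_assoc (Bm * Sg) A S1, hS1i', Matrix.mul_one, Matrix.mul_assoc Bm Sg G,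
      hSgi, Matrix.mul_one, hS2i']
  -- the four matrix identities
  have mAB : A * Mb⁻¹ * Bm = G := by
    rw [hMinv']
    simp only [← Matrix.mul_assoc]
    rw [hS1i', Matrix.one_mul, Matrix.mul_assoc G S2 Bm, hS2i, Matrix.mul_one]
  have mBA : Bm * Mb⁻¹ * A = G := by
    rw [hMinv]
    simp only [← Matrix.mul_assoc]
    rw [hS2i', Matrix.one_mul, Matrix.mul_assoc G S1 A, hS1i, Matrix.mul_one]
  have mAA : α • (A * Mb⁻¹ * A) = A - (1 - α) • G := by
    rw [hMinv']
    simp only [← Matrix.mul_assoc]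
    rw [hS1i', Matrix.one_mul]
    have h5 : α • (G * S2) = 1 - (1 - α) • (G * S1) := by
      rw [← Matrix.mul_smul, ← Matrix.mul_smul,
        show α • S2 = Sg - (1 - α) • S1 from by rw [hSgdef]; abel,
        Matrix.mul_sub, hSgi']
    calc α • (G * S2 * A) = (α • (G * S2)) * A := by rw [Matrix.smul_mul]
      _ = (1 - (1 - α) • (G * S1)) * A := by rw [h5]
      _ = A - (1 - α) • G := by
          rw [Matrix.sub_mul, Matrix.one_mul, Matrix.smul_mul, Matrix.mul_assoc, hS1i,
            Matrix.mul_one]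
  have mBB : (1 - α) • (Bm * Mb⁻¹ * Bm) = Bm - α • G := by
    rw [hMinv]
    simp only [← Matrix.mul_assoc]
    rw [hS2i', Matrix.one_mul]
    have h5 : (1 - α) • (G * S1) = 1 - α • (G * S2) := by
      rw [← Matrix.mul_smul, ← Matrix.mul_smul,
        show (1 - α) • S1 = Sg - α • S2 from by rw [hSgdef]; abel,
        Matrix.mul_sub, hSgi']
    calc (1 - α) • (G * S1 * Bm) = ((1 - α) • (G * S1)) * Bm := by rw [Matrix.smul_mul]
      _ = (1 - α • (G * S2)) * Bm := by rw [h5]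
      _ = Bm - α • G := by
          rw [Matrix.sub_mul, Matrix.one_mul, Matrix.smul_mul, Matrix.mul_assoc, hS2i,
            Matrix.mul_one]
  -- vectors
  set v := α • (A *ᵥ μ₁) + (1 - α) • (Bm *ᵥ μ₂) with hvdef
  set c := Mb⁻¹ *ᵥ v with hcdef
  have hMc : Mb *ᵥ c = v := by
    rw [hcdef, Matrix.mulVec_mulVec, hMbi, Matrix.one_mulVec]
  set a1 := μ₁ ⬝ᵥ (A *ᵥ μ₁) with ha1
  set b1 := μ₂ ⬝ᵥ (Bm *ᵥ μ₂) with hb1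
  set g11 := μ₁ ⬝ᵥ (G *ᵥ μ₁) with hg11
  set g12 := μ₁ ⬝ᵥ (G *ᵥ μ₂) with hg12
  set g21 := μ₂ ⬝ᵥ (G *ᵥ μ₁) with hg21
  set g22 := μ₂ ⬝ᵥ (G *ᵥ μ₂) with hg22
  have hT11 : α * (μ₁ ⬝ᵥ ((A * Mb⁻¹ * A) *ᵥ μ₁)) = a1 - (1 - α) * g11 := by
    have : μ₁ ⬝ᵥ ((α • (A * Mb⁻¹ * A)) *ᵥ μ₁) = μ₁ ⬝ᵥ ((A - (1 - α) • G) *ᵥ μ₁) := by rw [mAA]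
    simpa [Matrix.smul_mulVec, Matrix.sub_mulVec, dotProduct_smul,
      dotProduct_sub, smul_eq_mul, ha1, hg11] using this
  have hT22 : (1 - α) * (μ₂ ⬝ᵥ ((Bm * Mb⁻¹ * Bm) *ᵥ μ₂)) = b1 - α * g22 := by
    have : μ₂ ⬝ᵥ (((1 - α) • (Bm * Mb⁻¹ * Bm)) *ᵥ μ₂) = μ₂ ⬝ᵥ ((Bm - α • G) *ᵥ μ₂) := by rw [mBB]
    simpa [Matrix.smul_mulVec, Matrix.sub_mulVec, dotProduct_smul,
      dotProduct_sub, smul_eq_mul, hb1, hg22] using this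
  have hvMv : v ⬝ᵥ (Mb⁻¹ *ᵥ v)
      = α * α * (μ₁ ⬝ᵥ ((A * Mb⁻¹ * A) *ᵥ μ₁)) + α * (1 - α) * g12
        + (1 - α) * α * g21 + (1 - α) * (1 - α) * (μ₂ ⬝ᵥ ((Bm * Mb⁻¹ * Bm) *ᵥ μ₂)) := by
    rw [hvdef]
    simp only [Matrix.mulVec_add, Matrix.mulVec_smul, dotProduct_add,
      add_dotProduct, smul_dotProduct, dotProduct_smul, smul_eq_mul]
    rw [dp_conj2 A Mb⁻¹ A μ₁ μ₁, dp_conj2 A Mb⁻¹ Bm μ₁ μ₂, dp_conj2 Bm Mb⁻¹ A μ₂ μ₁,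
      dp_conj2 Bm Mb⁻¹ Bm μ₂ μ₂, hAT, hBT, mAB, mBA, ← hg12, ← hg21]
    ring
  set κ := α * (1 - α) * ((μ₁ - μ₂) ⬝ᵥ (G *ᵥ (μ₁ - μ₂))) with hκdef
  have hκ : κ = α * (1 - α) * (g11 - g12 - g21 + g22) := by
    rw [hκdef]
    simp only [Matrix.mulVec_sub, sub_dotProduct, dotProduct_sub,
      hg11, hg12, hg21, hg22]
    ring
  have hconst : v ⬝ᵥ (Mb⁻¹ *ᵥ v) + κ = α * a1 + (1 - α) * b1 := by
    rw [hvMv, hκ]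
    have e11 : μ₁ ⬝ᵥ ((A * Mb⁻¹ * A) *ᵥ μ₁) = (a1 - (1 - α) * g11) / α := by
      rw [eq_div_iff hα.ne']
      linarith [hT11]
    have e22 : μ₂ ⬝ᵥ ((Bm * Mb⁻¹ * Bm) *ᵥ μ₂) = (b1 - α * g22) / (1 - α) := by
      rw [eq_div_iff hβ]
      linarith [hT22]
    rw [e11, e22]
    field_simp
    ring
  have hquad : ∀ x : Fin m → ℝ,
      α * ((x - μ₁) ⬝ᵥ (A *ᵥ (x - μ₁))) + (1 - α) * ((x - μ₂) ⬝ᵥ (Bm *ᵥ (x - μ₂)))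
        = (x - c) ⬝ᵥ (Mb *ᵥ (x - c)) + κ := by
    intro x
    have hx1 : x ⬝ᵥ (Mb *ᵥ x) = α * (x ⬝ᵥ (A *ᵥ x)) + (1 - α) * (x ⬝ᵥ (Bm *ᵥ x)) := by
      rw [hMbdef]
      simp [Matrix.add_mulVec, Matrix.smul_mulVec, dotProduct_add,
        dotProduct_smul, smul_eq_mul]
    have hx2 : x ⬝ᵥ (Mb *ᵥ c) = α * (x ⬝ᵥ (A *ᵥ μ₁)) + (1 - α) * (x ⬝ᵥ (Bm *ᵥ μ₂)) := by
      rw [hMc, hvdef]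
      simp [dotProduct_add, dotProduct_smul, smul_eq_mul]
    have hx3 : c ⬝ᵥ (Mb *ᵥ x) = x ⬝ᵥ (Mb *ᵥ c) := dp_symm hMbT c x
    have hx4 : μ₁ ⬝ᵥ (A *ᵥ x) = x ⬝ᵥ (A *ᵥ μ₁) := dp_symm hAT μ₁ x
    have hx5 : μ₂ ⬝ᵥ (Bm *ᵥ x) = x ⬝ᵥ (Bm *ᵥ μ₂) := dp_symm hBT μ₂ x
    have hx6 : c ⬝ᵥ (Mb *ᵥ c) = α * a1 + (1 - α) * b1 - κ := by
      rw [hMc, hcdef, dotProduct_comm, ← sub_eq_zero]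
      have := hconst
      linarith [hconst]
    simp only [Matrix.mulVec_sub, sub_dotProduct, dotProduct_sub]
    rw [hx1, hx2, hx3, hx2, hx4, hx5, hx6, ← ha1, ← hb1]
    ring
  -- positivity facts
  have hP : (0:ℝ) < 2 * π := by positivity
  have hd1 : 0 < S1.det := h1.det_pos
  have hd2 : 0 < S2.det := h2.det_pos
  have hdg : 0 < Sg.det := hαpd.det_pos
  -- pointwise integrand identity
  have hpdf : ∀ x : Fin m → ℝ,
      mvGaussianPDF m μ₁ S1 x ^ α * mvGaussianPDF m μ₂ S2 x ^ (1 - α)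
        = ((2 * π) ^ (-(m:ℝ)/2) * S1.det ^ (-(1:ℝ)/2 * α) * S2.det ^ (-(1:ℝ)/2 * (1-α))
            * Real.exp (-(1/2) * κ))
          * Real.exp (-(1/2) * ((x - c) ⬝ᵥ (Mb *ᵥ (x - c)))) := by
    intro x
    simp only [mvGaussianPDF]
    rw [← hAdef, ← hBdef]
    rw [rpow_combine hP hd1 hd2]
    have hexp : α * (-(1/2) * ((x - μ₁) ⬝ᵥ (A *ᵥ (x - μ₁))))
          + (1 - α) * (-(1/2) * ((x - μ₂) ⬝ᵥ (Bm *ᵥ (x - μ₂))))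
        = -(1/2) * ((x - c) ⬝ᵥ (Mb *ᵥ (x - c))) + -(1/2) * κ := by
      linarith [hquad x]
    rw [hexp, Real.exp_add]
    ring
  -- integrate
  simp_rw [hpdf]
  rw [MeasureTheory.integral_const_mul]
  have hshift : (∫ x : Fin m → ℝ,
        (fun y : Fin m → ℝ => Real.exp (-(1/2) * (y ⬝ᵥ (Mb *ᵥ y)))) (x - c))
      = ∫ y : Fin m → ℝ, Real.exp (-(1/2) * (y ⬝ᵥ (Mb *ᵥ y))) :=
    MeasureTheory.integral_sub_right_eq_self (μ := (volume : Measure (Fin m → ℝ)))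
      (fun y : Fin m → ℝ => Real.exp (-(1/2) * (y ⬝ᵥ (Mb *ᵥ y)))) c
  simp only [] at hshift
  rw [show (∫ x : Fin m → ℝ, Real.exp (-(1/2) * ((x - c) ⬝ᵥ (Mb *ᵥ (x - c)))))
      = ∫ y : Fin m → ℝ, Real.exp (-(1/2) * (y ⬝ᵥ (Mb *ᵥ y))) from hshift]
  rw [gauss_int hMbpd]
  -- final arithmetic
  have hMdet : Mb.det = Sg.det * S1.det⁻¹ * S2.det⁻¹ := by
    have hd := congrArg Matrix.det hrel
    rw [Matrix.det_mul, Matrix.det_mul] at hd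
    field_simp
    linear_combination hd
  have hinvpow : ∀ d : ℝ, 0 < d → (d⁻¹ : ℝ) ^ (-(1:ℝ)/2) = d ^ ((1:ℝ)/2) := by
    intro d hd
    rw [Real.inv_rpow hd.le, ← Real.rpow_neg hd.le]
    norm_num
  have hMrpow : Mb.det ^ (-(1:ℝ)/2)
      = Sg.det ^ (-(1:ℝ)/2) * S1.det ^ ((1:ℝ)/2) * S2.det ^ ((1:ℝ)/2) := by
    rw [hMdet, Real.mul_rpow (by positivity) (by positivity),
      Real.mul_rpow (by positivity) (by positivity), hinvpow _ hd1, hinvpow _ hd2]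
  rw [hMrpow]
  have pa : (2*π) ^ (-(m:ℝ)/2) * (2*π) ^ ((m:ℝ)/2) = 1 := by
    rw [← Real.rpow_add hP, show (-(m:ℝ)/2 + (m:ℝ)/2) = 0 by ring, Real.rpow_zero]
  have pb : S1.det ^ (-(1:ℝ)/2*α) * S1.det ^ ((1:ℝ)/2) = S1.det ^ ((1-α)/2) := by
    rw [← Real.rpow_add hd1]
    congr 1
    ring
  have pc : S2.det ^ (-(1:ℝ)/2*(1-α)) * S2.det ^ ((1:ℝ)/2) = S2.det ^ (α/2) := by
    rw [← Real.rpow_add hd2]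
    congr 1
    ring
  have pd : Sg.det ^ (-(1:ℝ)/2) = (Sg.det ^ ((1:ℝ)/2))⁻¹ := by
    rw [← Real.rpow_neg hdg.le]
    norm_num
  have pe : Real.exp (-(1/2) * κ)
      = Real.exp (-(α * (1 - α) / 2) * ((μ₁ - μ₂) ⬝ᵥ (G *ᵥ (μ₁ - μ₂)))) := by
    rw [hκdef]
    congr 1
    ring
  calc (2 * π) ^ (-(m:ℝ)/2) * S1.det ^ (-(1:ℝ)/2 * α) * S2.det ^ (-(1:ℝ)/2 * (1-α))
        * Real.exp (-(1/2) * κ)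
        * ((2 * π) ^ ((m:ℝ)/2) * (Sg.det ^ (-(1:ℝ)/2) * S1.det ^ ((1:ℝ)/2) * S2.det ^ ((1:ℝ)/2)))
      = ((2*π) ^ (-(m:ℝ)/2) * (2*π) ^ ((m:ℝ)/2))
          * (S1.det ^ (-(1:ℝ)/2*α) * S1.det ^ ((1:ℝ)/2))
          * (S2.det ^ (-(1:ℝ)/2*(1-α)) * S2.det ^ ((1:ℝ)/2))
          * Sg.det ^ (-(1:ℝ)/2) * Real.exp (-(1/2) * κ) := by ring
    _ = S2.det ^ (α/2) * S1.det ^ ((1-α)/2) * Sg.det ^ (-(1:ℝ)/2)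
          * Real.exp (-(α * (1 - α) / 2) * ((μ₁ - μ₂) ⬝ᵥ (G *ᵥ (μ₁ - μ₂)))) := by
        rw [pa, pb, pc, pe]; ring
    _ = S2.det ^ (α / 2) * S1.det ^ ((1 - α) / 2) / Sg.det ^ ((1:ℝ) / 2)
          * Real.exp (-(α * (1 - α) / 2) * ((μ₁ - μ₂) ⬝ᵥ (G *ᵥ (μ₁ - μ₂)))) := by
        rw [pd]; ring
end

section
/- Let Σ₁, Σ₂ be positive definite m×m matrices, μ₁, μ₂ ∈ ℝ^m, and α ∈ ℝ such that A := αΣ₁^{-1} + (1-α)Σ₂^{-1} and Σ_α := (1-α)Σ₁ + αΣ₂ are positive definite. Set b := αΣ₁^{-1}μ₁ + (1-α)Σ₂^{-1}μ₂ and c₀ := α·μ₁ᵀΣ₁^{-1}μ₁ + (1-α)·μ₂ᵀΣ₂^{-1}μ₂. Then c₀ - bᵀA^{-1}b = α(1-α)·(μ₁ - μ₂)ᵀ Σ_α^{-1} (μ₁ - μ₂). -/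
open Matrix

private lemma quad_aux {m : ℕ} (P B Q : Matrix (Fin m) (Fin m) ℝ) (x y : Fin m → ℝ)
    (hP : Pᵀ = P) : (P *ᵥ x) ⬝ᵥ B *ᵥ (Q *ᵥ y) = x ⬝ᵥ (P * B * Q) *ᵥ y := by
  rw [mulVec_mulVec, dotProduct_mulVec, ← vecMul_transpose, hP, vecMul_vecMul,
    ← dotProduct_mulVec, Matrix.mul_assoc]

private lemma symm_of_posdef {m : ℕ} {A : Matrix (Fin m) (Fin m) ℝ} (h : A.PosDef) :
    Aᵀ = A := by
  have := h.isHermitian.eq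
  rw [Matrix.conjTranspose_eq_transpose_of_trivial] at this
  exact this

theorem stmt_7 (m : ℕ) (S1 S2 : Matrix (Fin m) (Fin m) ℝ) (μ₁ μ₂ : Fin m → ℝ) (α : ℝ)
    (h1 : S1.PosDef) (h2 : S2.PosDef)
    (hA : (α • S1⁻¹ + (1 - α) • S2⁻¹).PosDef)
    (hα : ((1 - α) • S1 + α • S2).PosDef) :
    (α • (μ₁ ⬝ᵥ S1⁻¹ *ᵥ μ₁) + (1 - α) • (μ₂ ⬝ᵥ S2⁻¹ *ᵥ μ₂))
      - (α • S1⁻¹ *ᵥ μ₁ + (1 - α) • S2⁻¹ *ᵥ μ₂) ⬝ᵥ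
          (α • S1⁻¹ + (1 - α) • S2⁻¹)⁻¹ *ᵥ (α • S1⁻¹ *ᵥ μ₁ + (1 - α) • S2⁻¹ *ᵥ μ₂)
      = α * (1 - α) * ((μ₁ - μ₂) ⬝ᵥ ((1 - α) • S1 + α • S2)⁻¹ *ᵥ (μ₁ - μ₂)) := by
  set P := S1⁻¹ with hPdef
  set Q := S2⁻¹ with hQdef
  set A := α • P + (1 - α) • Q with hAdef
  set B := A⁻¹ with hBdef
  set M := ((1 - α) • S1 + α • S2)⁻¹ with hMdef
  have hd1 : IsUnit S1.det := h1.det_pos.ne'.isUnit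
  have hd2 : IsUnit S2.det := h2.det_pos.ne'.isUnit
  have hBA : B * A = 1 := Matrix.nonsing_inv_mul A hA.det_pos.ne'.isUnit
  -- symmetric inverses
  have hPt : Pᵀ = P := by
    rw [hPdef, transpose_nonsing_inv, symm_of_posdef h1]
  have hQt : Qᵀ = Q := by
    rw [hQdef, transpose_nonsing_inv, symm_of_posdef h2]
  -- Σα = S1 * A * S2 = S2 * A * S1
  have h₁ : S1 * A * S2 = (1 - α) • S1 + α • S2 := by
    rw [hAdef, hPdef, hQdef, Matrix.mul_add, Matrix.add_mul, Matrix.mul_smul, Matrix.smul_mul,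
      Matrix.mul_smul, Matrix.smul_mul, Matrix.mul_nonsing_inv S1 hd1, Matrix.one_mul,
      Matrix.mul_assoc, Matrix.nonsing_inv_mul S2 hd2, Matrix.mul_one]
    exact add_comm _ _
  have h₂ : S2 * A * S1 = (1 - α) • S1 + α • S2 := by
    rw [hAdef, hPdef, hQdef, Matrix.mul_add, Matrix.add_mul, Matrix.mul_smul, Matrix.smul_mul,
      Matrix.mul_smul, Matrix.smul_mul, Matrix.mul_nonsing_inv S2 hd2, Matrix.one_mul,
      Matrix.mul_assoc, Matrix.nonsing_inv_mul S1 hd1, Matrix.mul_one]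
    exact add_comm _ _
  have hPBQ : P * B * Q = M := by
    rw [hMdef, ← h₂, Matrix.mul_inv_rev, Matrix.mul_inv_rev, ← hPdef, ← hQdef, ← hBdef,
      Matrix.mul_assoc]
  have hQBP : Q * B * P = M := by
    rw [hMdef, ← h₁, Matrix.mul_inv_rev, Matrix.mul_inv_rev, ← hPdef, ← hQdef, ← hBdef,
      Matrix.mul_assoc]
  have hαP : α • P = A - (1 - α) • Q := by rw [hAdef]; module
  have hαQ : (1 - α) • Q = A - α • P := by rw [hAdef]; module
  have hPBP : α • (P * B * P) = P - (1 - α) • M := by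
    calc α • (P * B * P) = P * B * (α • P) := (Matrix.mul_smul _ _ _).symm
      _ = P * B * (A - (1 - α) • Q) := by rw [hαP]
      _ = P * (B * A) - (1 - α) • (P * B * Q) := by
          rw [Matrix.mul_sub, Matrix.mul_smul, Matrix.mul_assoc]
      _ = P - (1 - α) • M := by rw [hBA, Matrix.mul_one, hPBQ]
  have hQBQ : (1 - α) • (Q * B * Q) = Q - α • M := by
    calc (1 - α) • (Q * B * Q) = Q * B * ((1 - α) • Q) := (Matrix.mul_smul _ _ _).symm
      _ = Q * B * (A - α • P) := by rw [hαQ]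
      _ = Q * (B * A) - α • (Q * B * P) := by
          rw [Matrix.mul_sub, Matrix.mul_smul, Matrix.mul_assoc]
      _ = Q - α • M := by rw [hBA, Matrix.mul_one, hQBP]
  -- scalar versions
  have e1 : α * (μ₁ ⬝ᵥ (P * B * P) *ᵥ μ₁) = μ₁ ⬝ᵥ P *ᵥ μ₁ - (1 - α) * (μ₁ ⬝ᵥ M *ᵥ μ₁) := by
    have := congrArg (fun N => μ₁ ⬝ᵥ N *ᵥ μ₁) hPBP
    simpa [sub_mulVec, smul_mulVec, dotProduct_sub, dotProduct_smul, smul_eq_mul]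
      using this
  have e2 : (1 - α) * (μ₂ ⬝ᵥ (Q * B * Q) *ᵥ μ₂) = μ₂ ⬝ᵥ Q *ᵥ μ₂ - α * (μ₂ ⬝ᵥ M *ᵥ μ₂) := by
    have := congrArg (fun N => μ₂ ⬝ᵥ N *ᵥ μ₂) hQBQ
    simpa [sub_mulVec, smul_mulVec, dotProduct_sub, dotProduct_smul, smul_eq_mul]
      using this
  -- expand the big quadratic form
  have hb : (α • P *ᵥ μ₁ + (1 - α) • Q *ᵥ μ₂) ⬝ᵥ B *ᵥ (α • P *ᵥ μ₁ + (1 - α) • Q *ᵥ μ₂)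
      = α * α * (μ₁ ⬝ᵥ (P * B * P) *ᵥ μ₁) + α * (1 - α) * (μ₁ ⬝ᵥ (P * B * Q) *ᵥ μ₂)
        + (1 - α) * α * (μ₂ ⬝ᵥ (Q * B * P) *ᵥ μ₁)
        + (1 - α) * (1 - α) * (μ₂ ⬝ᵥ (Q * B * Q) *ᵥ μ₂) := by
    simp only [mulVec_add, dotProduct_add, add_dotProduct, Matrix.mulVec_smul,
      smul_dotProduct, dotProduct_smul, smul_eq_mul,
      quad_aux P B P μ₁ μ₁ hPt, quad_aux P B Q μ₁ μ₂ hPt,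
      quad_aux Q B P μ₂ μ₁ hQt, quad_aux Q B Q μ₂ μ₂ hQt]
    ring
  rw [hb, hPBQ, hQBP]
  have hrhs : (μ₁ - μ₂) ⬝ᵥ M *ᵥ (μ₁ - μ₂)
      = μ₁ ⬝ᵥ M *ᵥ μ₁ - μ₁ ⬝ᵥ M *ᵥ μ₂ - μ₂ ⬝ᵥ M *ᵥ μ₁ + μ₂ ⬝ᵥ M *ᵥ μ₂ := by
    simp only [mulVec_sub, dotProduct_sub, sub_dotProduct]
    ring
  rw [hrhs]
  simp only [smul_eq_mul]
  linear_combination -α * e1 + (α - 1) * e2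
end
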